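/- For i ∈ [j] with j ∈ N, let U_i = {u^i_1,...,u^i_{k_i}} ⊂ r_i S^{n-1} with r_i > 0 and 2 ≤ k_i ≤ n+1, and suppose there exist positive scalars λ^i_1,...,λ^i_{k_i} with Σ_{l=1}^{k_i} λ^i_l u^i_l = 0 for each i. Then for every c ∈ R^n, max over choices l_1 ∈ [k_1],...,l_j ∈ [k_j] of ‖u^1_{l_1} + ... + u^j_{l_j} − c‖_2 is at least √(r_1² + ... + r_j²). -/

import Mathlib

open Finset

private lemma exists_nonneg_inner {n : ℕ} (U : Finset (EuclideanSpace ℝ (Fin n)))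
    (hU : U.Nonempty) (lam : EuclideanSpace ℝ (Fin n) → ℝ)
    (hlam : ∀ u ∈ U, 0 < lam u) (hzero : ∑ u ∈ U, lam u • u = 0)
    (v : EuclideanSpace ℝ (Fin n)) : ∃ u ∈ U, 0 ≤ (inner ℝ v u : ℝ) := by
  by_contra h
  push_neg at h
  have hsum : ∑ u ∈ U, lam u * inner ℝ v u < 0 := by
    have : ∀ u ∈ U, lam u * (inner ℝ v u : ℝ) < 0 := fun u hu =>
      mul_neg_of_pos_of_neg (hlam u hu) (h u hu)
    exact Finset.sum_neg this hU
  have : (inner ℝ v (∑ u ∈ U, lam u • u) : ℝ) = ∑ u ∈ U, lam u * inner ℝ v u := by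
    rw [inner_sum]
    exact Finset.sum_congr rfl fun u hu => real_inner_smul_right v u (lam u)
  rw [hzero, inner_zero_right] at this
  linarith [this ▸ hsum]

private lemma aux_sel {n : ℕ} : ∀ (j : ℕ) (U : Fin j → Finset (EuclideanSpace ℝ (Fin n)))
    (r : Fin j → ℝ), (∀ i, (U i).Nonempty) → (∀ i, ∀ u ∈ U i, ‖u‖ = r i) →
    ∀ (lam : Fin j → EuclideanSpace ℝ (Fin n) → ℝ), (∀ i, ∀ u ∈ U i, 0 < lam i u) →
    (∀ i, ∑ u ∈ U i, lam i u • u = 0) →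
    ∀ c : EuclideanSpace ℝ (Fin n), ∃ sel : Fin j → EuclideanSpace ℝ (Fin n),
      (∀ i, sel i ∈ U i) ∧ (∑ i, (r i) ^ 2) ≤ ‖(∑ i, sel i) - c‖ ^ 2 := by
  intro j
  induction j with
  | zero =>
      intro U r _ _ lam _ _ c
      exact ⟨fun i => i.elim0, fun i => i.elim0, by simp [sq_nonneg]⟩
  | succ j ih =>
      intro U r hne hnorm lam hlam hzero c
      obtain ⟨sel, hsel, hbound⟩ := ih (fun i => U i.castSucc) (fun i => r i.castSucc)
        (fun i => hne _) (fun i => hnorm _) (fun i => lam i.castSucc)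
        (fun i => hlam _) (fun i => hzero _) c
      set S := (∑ i, sel i) - c with hS
      obtain ⟨u, hu, hip⟩ := exists_nonneg_inner (U (Fin.last j)) (hne _) (lam (Fin.last j))
        (hlam _) (hzero _) S
      refine ⟨Fin.snoc sel u, ?_, ?_⟩
      · intro i
        refine Fin.lastCases ?_ ?_ i
        · simp [hu]
        · intro k; simpa using hsel k
      · rw [Fin.sum_univ_castSucc, Fin.sum_univ_castSucc]
        simp only [Fin.snoc_castSucc, Fin.snoc_last]
        have hrw : (∑ i : Fin j, sel i) + u - c = S + u := by rw [hS]; abel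
        rw [hrw, norm_add_sq_real]
        have : ‖u‖ = r (Fin.last j) := hnorm _ u hu
        rw [this]
        nlinarith [hbound, hip]

theorem additive_colourful_caratheodory {n j : ℕ}
    (U : Fin j → Finset (EuclideanSpace ℝ (Fin n))) (r : Fin j → ℝ)
    (hr : ∀ i, 0 < r i)
    (hcard : ∀ i, 2 ≤ (U i).card ∧ (U i).card ≤ n + 1)
    (hnorm : ∀ i, ∀ u ∈ U i, ‖u‖ = r i)
    (lam : Fin j → EuclideanSpace ℝ (Fin n) → ℝ)
    (hlam : ∀ i, ∀ u ∈ U i, 0 < lam i u)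
    (hzero : ∀ i, ∑ u ∈ U i, lam i u • u = 0)
    (c : EuclideanSpace ℝ (Fin n)) :
    ∃ sel : Fin j → EuclideanSpace ℝ (Fin n),
      (∀ i, sel i ∈ U i) ∧
        Real.sqrt (∑ i, (r i) ^ 2) ≤ ‖(∑ i, sel i) - c‖ := by
  have hne : ∀ i, (U i).Nonempty := fun i =>
    Finset.card_pos.mp (by linarith [(hcard i).1])
  obtain ⟨sel, hsel, hbound⟩ := aux_sel j U r hne hnorm lam hlam hzero c
  refine ⟨sel, hsel, ?_⟩
  calc Real.sqrt (∑ i, (r i) ^ 2) ≤ Real.sqrt (‖(∑ i, sel i) - c‖ ^ 2) :=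
        Real.sqrt_le_sqrt hbound
    _ = ‖(∑ i, sel i) - c‖ := Real.sqrt_sq (norm_nonneg _)
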